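/- For every τ in the upper half-plane with Im τ ≥ √3/2, one has |(E₂(τ) − 1)/q| < 25, where q = e^{2πiτ}. -/

import Mathlib

open Complex

noncomputable section

/-- `sigma' k n = ∑_{d ∣ n} d^k`, the sum of the k-th powers of the positive divisors of n. -/
def sigma' (k n : ℕ) : ℕ := ∑ d ∈ n.divisors, d ^ k

/-- `qpar τ = e^{2πiτ}`. -/
def qpar (τ : ℂ) : ℂ := Complex.exp (2 * Real.pi * Complex.I * τ)

/-- The quasimodular Eisenstein series `E₂(τ) = 1 - 24 ∑_{n≥1} σ₁(n) qⁿ`. -/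
def E2 (τ : ℂ) : ℂ := 1 - 24 * ∑' n : ℕ, (sigma' 1 (n + 1) : ℂ) * qpar τ ^ (n + 1)

/-- The Eisenstein series `E₄(τ) = 1 + 240 ∑_{n≥1} σ₃(n) qⁿ`. -/
def E4 (τ : ℂ) : ℂ := 1 + 240 * ∑' n : ℕ, (sigma' 3 (n + 1) : ℂ) * qpar τ ^ (n + 1)

/-- The Eisenstein series `E₆(τ) = 1 - 504 ∑_{n≥1} σ₅(n) qⁿ`. -/
def E6 (τ : ℂ) : ℂ := 1 - 504 * ∑' n : ℕ, (sigma' 5 (n + 1) : ℂ) * qpar τ ^ (n + 1)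

/-- The modular discriminant `Δ = (E₄³ - E₆²)/1728`. -/
def Δ' (τ : ℂ) : ℂ := (E4 τ ^ 3 - E6 τ ^ 2) / 1728

/-- The modular j-invariant `j = E₄³/Δ`. -/
def jinv (τ : ℂ) : ℂ := E4 τ ^ 3 / Δ' τ

/-- `χ = E₂E₄E₆/Δ`. -/
def χ' (τ : ℂ) : ℂ := E2 τ * E4 τ * E6 τ / Δ' τ

/-- `ξ = E₄E₆/Δ`. -/
def ξ' (τ : ℂ) : ℂ := E4 τ * E6 τ / Δ' τ

/-- The almost holomorphic modular function `χ*(τ) = χ(τ) - (3/(π Im τ)) ξ(τ)`. -/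
def χstar (τ : ℂ) : ℂ := χ' τ - (3 / (Real.pi * τ.im) : ℝ) * ξ' τ

/-- `τ` lies in the upper half-plane and satisfies `aτ² + bτ + c = 0` where
`a > 0` and `gcd(a,b,c) = 1`. -/
def QuadPoint (τ : ℂ) (a b c : ℤ) : Prop :=
  0 < τ.im ∧ 0 < a ∧ Int.gcd (Int.gcd a b) c = 1 ∧
    (a : ℂ) * τ ^ 2 + (b : ℂ) * τ + (c : ℂ) = 0

/-- `τ` is a quadratic point of the upper half-plane. -/
def IsQuadratic (τ : ℂ) : Prop := ∃ a b c : ℤ, QuadPoint τ a b c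

/-- `τ` is a quadratic point of discriminant `D = b² - 4ac`. -/
def HasDisc (τ : ℂ) (D : ℤ) : Prop :=
  ∃ a b c : ℤ, QuadPoint τ a b c ∧ D = b ^ 2 - 4 * a * c

/-- Membership in the closed standard fundamental domain
`F = {z ∈ ℍ : |z| ≥ 1, -1/2 ≤ Re z ≤ 1/2}`. -/
def inF (τ : ℂ) : Prop :=
  0 < τ.im ∧ 1 ≤ ‖τ‖ ∧ -(1 / 2) ≤ τ.re ∧ τ.re ≤ 1 / 2

/-- `τ` and `τ'` lie in the same `SL₂(ℤ)`-orbit under Möbius transformations. -/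
def MoebiusEquiv (τ τ' : ℂ) : Prop :=
  ∃ γ : Matrix.SpecialLinearGroup (Fin 2) ℤ,
    τ' = ((γ.1 0 0 : ℂ) * τ + (γ.1 0 1 : ℂ)) / ((γ.1 1 0 : ℂ) * τ + (γ.1 1 1 : ℂ))

lemma sq_le_pow3 : ∀ n, 2 ≤ n → (n+1)^2 ≤ 3^n := by
  intro n hn
  induction n with
  | zero => omega
  | succ m ih =>
    rcases Nat.lt_or_ge m 2 with h | h
    · interval_cases m <;> simp_all
    · have h3 : 3^(m+1) = 3*3^m := by ring
      nlinarith [ih h]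

lemma sigma'_le_sq (m : ℕ) : sigma' 1 m ≤ m^2 := by
  unfold sigma'
  calc ∑ d ∈ m.divisors, d ^ 1 ≤ ∑ d ∈ m.divisors, m := by
        apply Finset.sum_le_sum
        intro d hd
        simpa using Nat.divisor_le hd
    _ = m.divisors.card * m := by rw [Finset.sum_const, smul_eq_mul]
    _ ≤ m * m := by
        apply Nat.mul_le_mul_right
        calc m.divisors.card ≤ (Finset.Ico 1 (m+1)).card :=
              Finset.card_le_card (by rw [Nat.divisors]; exact Finset.filter_subset _ _)
          _ = m := by simp
    _ = m ^ 2 := (sq m).symm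

lemma sigma'_le (n : ℕ) : sigma' 1 (n+1) ≤ 3^n := by
  rcases Nat.lt_or_ge n 2 with h | h
  · interval_cases n <;> decide +kernel
  · calc sigma' 1 (n+1) ≤ (n+1)^2 := sigma'_le_sq _
      _ ≤ 3^n := sq_le_pow3 n h

lemma abs_qpar_le (τ : ℂ) (hτ : Real.sqrt 3 / 2 ≤ τ.im) :
    ‖qpar τ‖ ≤ 1 / 100 := by
  have h1 : ‖qpar τ‖ = Real.exp (-(2 * Real.pi * τ.im)) := by
    rw [qpar, Complex.norm_exp]
    congr 1
    simp [Complex.mul_re, Complex.mul_im]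
  rw [h1]
  have hs3 : (1.7 : ℝ) ≤ Real.sqrt 3 := by
    rw [show (1.7:ℝ) = Real.sqrt (1.7^2) by rw [Real.sqrt_sq]; norm_num]
    exact Real.sqrt_le_sqrt (by norm_num)
  have hpi : (3.14 : ℝ) ≤ Real.pi := by linarith [Real.pi_gt_d6]
  have h5 : (5:ℝ) ≤ Real.pi * Real.sqrt 3 := by nlinarith
  have hmono : Real.pi * Real.sqrt 3 ≤ 2 * Real.pi * τ.im := by
    have := Real.pi_pos
    nlinarith
  have he5 : (100:ℝ) ≤ Real.exp 5 := by
    have h : Real.exp 5 = Real.exp 1 ^ 5 := by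
      rw [show (5:ℝ) = ((5:ℕ):ℝ) * 1 by norm_num, Real.exp_nat_mul]
    have he : (2.7:ℝ) ≤ Real.exp 1 := by linarith [Real.exp_one_gt_d9]
    have : (2.7:ℝ)^5 ≤ Real.exp 1 ^ 5 := pow_le_pow_left₀ (by norm_num) he 5
    rw [h]; nlinarith
  have h100 : (100:ℝ) ≤ Real.exp (2 * Real.pi * τ.im) :=
    le_trans he5 (Real.exp_le_exp.mpr (by linarith))
  rw [Real.exp_neg]
  rw [inv_le_comm₀ (lt_of_lt_of_le (by norm_num) h100) (by norm_num)]
  linarith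


/-- For `Im τ ≥ √3/2`, `|(E₂(τ) - 1)/q| < 25`. -/
theorem E2_tail_bound (τ : ℂ) (hτ : Real.sqrt 3 / 2 ≤ τ.im) :
    ‖(E2 τ - 1) / qpar τ‖ < 25 := by
  set q : ℂ := qpar τ with hqdef
  have hq0 : q ≠ 0 := Complex.exp_ne_zero _
  have hr : ‖q‖ ≤ 1 / 100 := abs_qpar_le τ hτ
  set T : ℂ := ∑' n : ℕ, (sigma' 1 (n+1) : ℂ) * q ^ n with hT
  have hS : (∑' n : ℕ, (sigma' 1 (n+1) : ℂ) * q ^ (n+1)) = T * q := by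
    rw [hT, ← tsum_mul_right]
    exact tsum_congr fun n => by rw [pow_succ]; ring
  have hdiv : (E2 τ - 1) / q = -24 * T := by
    rw [E2, hS]; field_simp; ring
  rw [hdiv]
  have habs : ‖-24 * T‖ = 24 * ‖T‖ := by
    rw [norm_mul]
    norm_num
  rw [habs]
  -- bound each term
  have hb : ∀ n : ℕ, ‖(sigma' 1 (n+1) : ℂ) * q ^ n‖ ≤ (3/100)^n := by
    intro n
    rw [norm_mul, norm_pow, Complex.norm_natCast]
    have h1 : (sigma' 1 (n+1) : ℝ) ≤ 3^n := by exact_mod_cast sigma'_le n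
    have h2 : ‖q‖^n ≤ (1/100)^n :=
      pow_le_pow_left₀ (norm_nonneg q) hr n
    calc (sigma' 1 (n+1) : ℝ) * ‖q‖^n ≤ 3^n * (1/100)^n := by
          apply mul_le_mul h1 h2 (by positivity) (by positivity)
      _ = (3/100)^n := by rw [← mul_pow]; norm_num
  have hgsum : Summable (fun n : ℕ => ((3:ℝ)/100)^n) :=
    summable_geometric_of_lt_one (by norm_num) (by norm_num)
  have hsum2 : Summable (fun n : ℕ => ‖(sigma' 1 (n+1) : ℂ) * q ^ n‖) :=
    Summable.of_nonneg_of_le (fun n => norm_nonneg _) hb hgsum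
  have hTle : ‖T‖ ≤ 100 / 97 := by
    calc ‖T‖ ≤ ∑' n : ℕ, ‖(sigma' 1 (n+1) : ℂ) * q ^ n‖ :=
          norm_tsum_le_tsum_norm hsum2
      _ ≤ ∑' n : ℕ, ((3:ℝ)/100)^n := Summable.tsum_le_tsum hb hsum2 hgsum
      _ = (1 - 3/100)⁻¹ := tsum_geometric_of_lt_one (by norm_num) (by norm_num)
      _ = 100 / 97 := by norm_num
  linarith
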